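/- Let α = α(S) satisfy α_k / S → π̄_k with π̄ ∈ int Δ^{K−1} as S → ∞, where S = Σ_k α_k. Then the mutual information of the Dirichlet–categorical model, I = H(E[π]) − E[H(π)], where H(E[π]) = −Σ_k (α_k/S) log(α_k/S) and E[H(π)] = −Σ_k (α_k/S)(ψ(α_k+1) − ψ(S+1)), satisfies I = (K−1)/(2S) + O(1/S²). -/

import Mathlib

open MeasureTheory Real Filter Finset

/-- The digamma function `ψ(x) = d/dx log Γ(x)`. -/
noncomputable def digamma (x : ℝ) : ℝ := deriv (fun y => Real.log (Real.Gamma y)) x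

/-- Multivariate Beta function `B(α) = (∏ Γ(α_k)) / Γ(Σ α_k)`. -/
noncomputable def multiBeta {K : ℕ} (α : Fin K → ℝ) : ℝ :=
  (∏ k, Real.Gamma (α k)) / Real.Gamma (∑ k, α k)

/-- Parameterization domain: the open corner `{x | x_i > 0, Σ x_i < 1}` of ℝ^K,
parameterizing the interior of the simplex Δ^K via the last coordinate `1 - Σ x_i`. -/
def openCorner (K : ℕ) : Set (Fin K → ℝ) := {x | (∀ i, 0 < x i) ∧ ∑ i, x i < 1}

/-- Full simplex point `pp ∈ Δ^K ⊂ ℝ^{K+1}` determined by its first `K` coordinates. -/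
noncomputable def fullSimplex {K : ℕ} (x : Fin K → ℝ) : Fin (K + 1) → ℝ :=
  Fin.snoc x (1 - ∑ i, x i)

/-- Dirichlet density with parameter `α`, expressed in the coordinates of `openCorner K`. -/
noncomputable def dirichletPDF {K : ℕ} (α : Fin (K + 1) → ℝ) (x : Fin K → ℝ) : ℝ :=
  (multiBeta α)⁻¹ * ∏ k, (fullSimplex x k) ^ (α k - 1)

/-- Dirichlet density evaluated at a full simplex vector `pp ∈ ℝ^K`. -/
noncomputable def dirDensity {K : ℕ} (α : Fin K → ℝ) (pp : Fin K → ℝ) : ℝ :=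
  (multiBeta α)⁻¹ * ∏ k, (pp k) ^ (α k - 1)

lemma logGamma_diff {x : ℝ} (hx : 0 < x) :
    DifferentiableAt ℝ (fun y => Real.log (Real.Gamma y)) x :=
  (Real.differentiableAt_Gamma fun m => (by positivity : (0:ℝ) < x + m).ne' ∘ fun h => by
      linarith [h ▸ le_refl x]).log (Real.Gamma_pos_of_pos hx).ne'

lemma digamma_hasDerivAt {x : ℝ} (hx : 0 < x) :
    HasDerivAt (fun y => Real.log (Real.Gamma y)) (digamma x) x :=
  (logGamma_diff hx).hasDerivAt

lemma digamma_rec {x : ℝ} (hx : 0 < x) : digamma (x + 1) = digamma x + 1 / x := by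
  have h_rec : ∀ y : ℝ, 0 < y →
      Real.log (Real.Gamma (y + 1)) = Real.log (Real.Gamma y) + Real.log y := fun y hy => by
    rw [Real.Gamma_add_one hy.ne', Real.log_mul hy.ne' (Real.Gamma_pos_of_pos hy).ne', add_comm]
  unfold digamma
  rw [← deriv_comp_add_const, one_div, ← Real.deriv_log,
    ← deriv_add (logGamma_diff hx) (Real.differentiableAt_log hx.ne')]
  apply Filter.EventuallyEq.deriv_eq
  filter_upwards [eventually_gt_nhds hx] using h_rec

lemma digamma_monotoneOn : MonotoneOn digamma (Set.Ioi (0:ℝ)) := by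
  have := Real.convexOn_log_Gamma.monotoneOn_deriv (fun x hx => by
    rw [Function.comp_def]; exact logGamma_diff hx)
  rwa [Function.comp_def] at this

lemma digamma_intervalIntegrable {x : ℝ} (hx : 0 < x) :
    IntervalIntegrable digamma volume x (x + 1) := by
  apply MonotoneOn.intervalIntegrable
  apply digamma_monotoneOn.mono
  rw [Set.uIcc_of_le (by linarith)]
  intro t ht
  exact lt_of_lt_of_le hx ht.1

lemma integral_digamma {x : ℝ} (hx : 0 < x) :
    ∫ t in x..(x + 1), digamma t = Real.log x := by
  rw [intervalIntegral.integral_eq_sub_of_hasDerivAt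
      (f := fun y => Real.log (Real.Gamma y)) (fun t ht => by
        rw [Set.uIcc_of_le (by linarith)] at ht
        exact digamma_hasDerivAt (lt_of_lt_of_le hx ht.1))
      (digamma_intervalIntegrable hx)]
  rw [Real.Gamma_add_one hx.ne', Real.log_mul hx.ne' (Real.Gamma_pos_of_pos hx).ne']
  ring

lemma log_le_digamma_succ {x : ℝ} (hx : 0 < x) : Real.log x ≤ digamma (x + 1) := by
  have h1 : ∫ t in x..(x + 1), digamma t ≤ ∫ t in x..(x + 1), digamma (x + 1) := by
    apply intervalIntegral.integral_mono_on (by linarith) (digamma_intervalIntegrable hx)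
      intervalIntegrable_const
    intro t ht
    exact digamma_monotoneOn (Set.mem_Ioi.2 (lt_of_lt_of_le hx ht.1))
      (Set.mem_Ioi.2 (by linarith)) ht.2
  rwa [integral_digamma hx, intervalIntegral.integral_const, smul_eq_mul,
    add_sub_cancel_left, one_mul] at h1

lemma digamma_le_log {x : ℝ} (hx : 0 < x) : digamma x ≤ Real.log x := by
  have h1 : ∫ t in x..(x + 1), digamma x ≤ ∫ t in x..(x + 1), digamma t := by
    apply intervalIntegral.integral_mono_on (by linarith) intervalIntegrable_const
      (digamma_intervalIntegrable hx)
    intro t ht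
    exact digamma_monotoneOn (Set.mem_Ioi.2 hx)
      (Set.mem_Ioi.2 (lt_of_lt_of_le hx ht.1)) ht.1
  rwa [integral_digamma hx, intervalIntegral.integral_const, smul_eq_mul,
    add_sub_cancel_left, one_mul] at h1

lemma e_nonneg {x : ℝ} (hx : 0 < x) : 0 ≤ digamma (x + 1) - Real.log x :=
  sub_nonneg.2 (log_le_digamma_succ hx)

lemma e_le {x : ℝ} (hx : 0 < x) : digamma (x + 1) - Real.log x ≤ 1 / x := by
  rw [digamma_rec hx]
  linarith [digamma_le_log hx]

lemma log_quad_bound {t : ℝ} (ht : 0 < t) (ht2 : t ≤ 1/2) :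
    |Real.log (1 + t) - (t - t^2/2)| ≤ 2 * t^3 := by
  have h := Real.abs_log_sub_add_sum_range_le (x := -t) (by rw [abs_neg, abs_of_pos ht]; linarith) 2
  rw [abs_neg, abs_of_pos ht] at h
  simp only [Finset.sum_range_succ, Finset.sum_range_zero] at h
  have hexp : (∑ i ∈ Finset.range 0, (-t) ^ (i+1) / (i+1)) = 0 := rfl
  norm_num at h
  have h2 : t ^ 3 / (1 - t) ≤ 2 * t^3 := by
    rw [div_le_iff₀ (by linarith)]
    nlinarith [pow_pos ht 3]
  rw [show Real.log (1 + t) - (t - t^2/2) = -t + t^2/2 + Real.log (1+t) by ring]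
  exact h.trans h2

lemma term_bound {y : ℝ} (hy : 2 ≤ y) :
    |(Real.log (y+1) - Real.log y - 1/(y+1)) - (1/(2*y) - 1/(2*(y+1)))|
      ≤ 12 * (1/(2*y^2) - 1/(2*(y+1)^2)) := by
  have hy0 : 0 < y := by linarith
  have ht : 0 < 1/y := by positivity
  have ht2 : 1/y ≤ 1/2 := by
    rw [div_le_div_iff₀ hy0 two_pos]; linarith
  have hlog : Real.log (y+1) - Real.log y = Real.log (1 + 1/y) := by
    rw [← Real.log_div (by linarith) hy0.ne']
    congr 1
    field_simp
  have hA := log_quad_bound ht ht2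
  have hB : ((1/y) - (1/y)^2/2) - (1/(y+1) + (1/(2*y) - 1/(2*(y+1))))
      = -(1/(2*y^2*(y+1))) := by
    field_simp
    ring
  have hsplit : (Real.log (y+1) - Real.log y - 1/(y+1)) - (1/(2*y) - 1/(2*(y+1)))
      = (Real.log (1 + 1/y) - ((1/y) - (1/y)^2/2))
        + (((1/y) - (1/y)^2/2) - (1/(y+1) + (1/(2*y) - 1/(2*(y+1))))) := by
    rw [hlog]; ring
  rw [hsplit]
  have h1 : |(Real.log (1 + 1/y) - ((1/y) - (1/y)^2/2))
        + (((1/y) - (1/y)^2/2) - (1/(y+1) + (1/(2*y) - 1/(2*(y+1)))))|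
      ≤ 2 * (1/y)^3 + 1/(2*y^2*(y+1)) := by
    refine (abs_add_le _ _).trans ?_
    rw [hB, abs_neg, abs_of_pos (show (0:ℝ) < 1/(2*y^2*(y+1)) by positivity)]
    exact add_le_add hA le_rfl
  refine h1.trans ?_
  rw [div_pow, one_pow]
  rw [show 2*(1/y^3) + 1/(2*y^2*(y+1)) = (5*y+4)/(2*y^3*(y+1)) by field_simp; ring,
    show 12*(1/(2*y^2) - 1/(2*(y+1)^2)) = (12*(2*y+1))/(2*y^2*(y+1)^2) by field_simp; ring,
    div_le_div_iff₀ (by positivity) (by positivity)]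
  nlinarith [pow_pos hy0 2, pow_pos hy0 3, pow_pos hy0 4, sq_nonneg (y+1)]

lemma digamma_asymp {x : ℝ} (hx : 2 ≤ x) :
    |digamma (x+1) - Real.log x - 1/(2*x)| ≤ 6 / x^2 := by
  have hx0 : 0 < x := by linarith
  set e : ℝ → ℝ := fun y => digamma (y+1) - Real.log y with he
  set u : ℕ → ℝ := fun n => e (x+n) - 1/(2*(x+n)) with hu
  set q : ℕ → ℝ := fun n => 1/(2*(x+n)^2) with hq
  have hxn : ∀ n : ℕ, 2 ≤ x + n := fun n => by
    have : (0:ℝ) ≤ n := Nat.cast_nonneg n; linarith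
  have hstep : ∀ n : ℕ, |u n - u (n+1)| ≤ 12 * (q n - q (n+1)) := by
    intro n
    have h2 := hxn n
    have key := term_bound (y := x + n) h2
    have h3 : u n - u (n+1) = (Real.log (x+n+1) - Real.log (x+n) - 1/(x+n+1))
        - (1/(2*(x+n)) - 1/(2*(x+n+1))) := by
      simp only [hu, he]
      push_cast
      rw [show x + ((n:ℝ) + 1) = x + n + 1 by ring,
        digamma_rec (show (0:ℝ) < x + n + 1 by linarith)]
      ring
    have h4 : q n - q (n+1) = 1/(2*(x+n)^2) - 1/(2*(x+n+1)^2) := by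
      simp only [hq]; push_cast; ring
    rw [h3, h4]
    exact key
  have habs : ∀ N : ℕ, |u 0 - u N| ≤ 6 / x^2 := by
    intro N
    rw [← Finset.sum_range_sub' u N]
    calc |∑ n ∈ Finset.range N, (u n - u (n+1))|
        ≤ ∑ n ∈ Finset.range N, |u n - u (n+1)| := Finset.abs_sum_le_sum_abs _ _
      _ ≤ ∑ n ∈ Finset.range N, 12 * (q n - q (n+1)) :=
          Finset.sum_le_sum (fun n _ => hstep n)
      _ = 12 * (q 0 - q N) := by rw [← Finset.mul_sum, Finset.sum_range_sub' q N]
      _ ≤ 6 / x^2 := by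
          have hqN : 0 ≤ q N := by
            simp only [hq]; positivity
          have hq0 : q 0 = 1/(2*x^2) := by simp [hq]
          have h12 : (12:ℝ) * (1/(2*x^2)) = 6/x^2 := by ring
          rw [hq0]; linarith
  have ht1 : Tendsto (fun N : ℕ => x + (N:ℝ)) atTop atTop :=
    tendsto_atTop_add_const_left atTop x tendsto_natCast_atTop_atTop
  have he0 : Tendsto (fun N : ℕ => e (x + (N:ℝ))) atTop (nhds 0) := by
    have h1 : ∀ N : ℕ, 0 ≤ e (x + (N:ℝ)) := fun N => e_nonneg (by linarith [hxn N])
    have h2 : ∀ N : ℕ, e (x + (N:ℝ)) ≤ 1/(x + (N:ℝ)) := fun N => e_le (by linarith [hxn N])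
    have h3 : Tendsto (fun N : ℕ => 1/(x+(N:ℝ))) atTop (nhds 0) := by
      simpa only [Pi.inv_def, one_div] using ht1.inv_tendsto_atTop
    exact squeeze_zero h1 h2 h3
  have hp0 : Tendsto (fun N : ℕ => 1/(2*(x+(N:ℝ)))) atTop (nhds 0) := by
    simpa only [Pi.inv_def, one_div] using
      (ht1.const_mul_atTop (show (0:ℝ) < 2 by norm_num)).inv_tendsto_atTop
  have huN : Tendsto u atTop (nhds 0) := by
    rw [hu]
    simpa using he0.sub hp0
  have hfin : |u 0 - 0| ≤ 6 / x^2 :=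
    le_of_tendsto ((tendsto_const_nhds.sub huN).abs) (Filter.Eventually.of_forall habs)
  have hu0 : u 0 = digamma (x+1) - Real.log x - 1/(2*x) := by
    simp [hu, he]
  rw [sub_zero, hu0] at hfin
  exact hfin

noncomputable def Efun (y : ℝ) : ℝ := digamma (y + 1) - Real.log y - 1/(2*y)

lemma Efun_bound {y : ℝ} (hy : 2 ≤ y) : |Efun y| ≤ 6 / y^2 := digamma_asymp hy

/-- Asymptotic behavior of the Dirichlet–categorical mutual information
`I = H(E[pp]) − E[H(pp)]`. If `α(S)/S → pp̄` in the interior of the simplex with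
`Σ_k α(S)_k = S`, then `I(S) = (K−1)/(2S) + O(1/S²)`. -/
theorem mutual_information_asymptotic {K : ℕ} (hK : 1 ≤ K)
    (α : ℝ → Fin K → ℝ) (pibar : Fin K → ℝ)
    (hαpos : ∀ S > (0 : ℝ), ∀ k, 0 < α S k)
    (hsum : ∀ S > (0 : ℝ), ∑ k, α S k = S)
    (hpppos : ∀ k, 0 < pibar k) (hppsum : ∑ k, pibar k = 1)
    (hlim : ∀ k, Tendsto (fun S => α S k / S) atTop (nhds (pibar k))) :
    ∃ C S₀ : ℝ, 0 < C ∧ 0 < S₀ ∧ ∀ S : ℝ, S₀ ≤ S →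
      |((-∑ k, (α S k / S) * Real.log (α S k / S))
          - (-∑ k, (α S k / S) * (digamma (α S k + 1) - digamma (S + 1))))
        - (K - 1) / (2 * S)| ≤ C / S ^ 2 := by
  have hev : ∀ᶠ S in (atTop : Filter ℝ), ∀ k, pibar k / 2 ≤ α S k / S := by
    refine eventually_all.2 fun k => ?_
    exact (hlim k).eventually (eventually_ge_nhds (by linarith [hpppos k]))
  obtain ⟨S₁, hS₁⟩ := eventually_atTop.mp hev
  have hev' : ∀ᶠ S in (atTop : Filter ℝ), ∀ k : Fin K, 4 / pibar k ≤ S :=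
    eventually_all.2 fun k => eventually_ge_atTop _
  obtain ⟨S₂, hS₂⟩ := eventually_atTop.mp hev'
  refine ⟨6 + ∑ k, 12 / pibar k, max (max S₁ S₂) 2, ?_, ?_, ?_⟩
  · have : (0:ℝ) ≤ ∑ k, 12 / pibar k :=
      Finset.sum_nonneg fun k _ => le_of_lt (by have := hpppos k; positivity)
    linarith
  · exact lt_of_lt_of_le two_pos (le_max_right _ _)
  intro S hS
  have hS2 : 2 ≤ S := le_trans (le_max_right _ _) hS
  have hS0 : 0 < S := by linarith
  have hk1 : ∀ k, pibar k / 2 ≤ α S k / S :=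
    hS₁ S (le_trans ((le_max_left _ _).trans (le_max_left _ _)) hS)
  have hk2 : ∀ k, 4 / pibar k ≤ S :=
    hS₂ S (le_trans ((le_max_right _ _).trans (le_max_left _ _)) hS)
  have hα : ∀ k, 0 < α S k := hαpos S hS0
  have hαlb : ∀ k, pibar k / 2 * S ≤ α S k := fun k => by
    have h := mul_le_mul_of_nonneg_right (hk1 k) (le_of_lt hS0)
    rwa [div_mul_cancel₀ _ hS0.ne'] at h
  have hαk2 : ∀ k, 2 ≤ α S k := fun k => by
    have h2 := hk2 k
    have hp := hpppos k
    have h4 : 4 ≤ pibar k * S := by rwa [div_le_iff₀ hp, mul_comm] at h2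
    have := hαlb k
    nlinarith
  have hsum' : ∑ k, α S k / S = 1 := by
    rw [← Finset.sum_div, hsum S hS0, div_self hS0.ne']
  -- termwise identity
  have hterm : ∀ k, (α S k / S) * (digamma (α S k + 1) - digamma (S + 1))
        - (α S k / S) * Real.log (α S k / S)
      = (α S k / S) * Efun (α S k) - (Efun S + 1/(2*S)) * (α S k / S) + 1/(2*S) := by
    intro k
    have ha := hα k
    have hEa : digamma (α S k + 1) = Real.log (α S k) + 1/(2*α S k) + Efun (α S k) := by
      simp only [Efun]; ring
    have hES : digamma (S + 1) = Real.log S + 1/(2*S) + Efun S := by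
      simp only [Efun]; ring
    have hlogp : Real.log (α S k / S) = Real.log (α S k) - Real.log S :=
      Real.log_div ha.ne' hS0.ne'
    rw [hEa, hES, hlogp]
    field_simp
    ring
  have hBA : ((-∑ k, (α S k / S) * Real.log (α S k / S))
        - (-∑ k, (α S k / S) * (digamma (α S k + 1) - digamma (S + 1))))
      = ∑ k, ((α S k / S) * (digamma (α S k + 1) - digamma (S + 1))
          - (α S k / S) * Real.log (α S k / S)) := by
    rw [Finset.sum_sub_distrib]
    ring
  have hkey : ((-∑ k, (α S k / S) * Real.log (α S k / S))
        - (-∑ k, (α S k / S) * (digamma (α S k + 1) - digamma (S + 1))))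
        - ((K:ℝ) - 1) / (2 * S)
      = (∑ k, (α S k / S) * Efun (α S k)) - Efun S := by
    rw [hBA, Finset.sum_congr rfl (fun k _ => hterm k), Finset.sum_add_distrib,
      Finset.sum_sub_distrib, ← Finset.mul_sum, hsum', Finset.sum_const,
      Finset.card_univ, Fintype.card_fin, nsmul_eq_mul]
    have hKc : (1:ℝ) ≤ (K:ℝ) := by exact_mod_cast hK
    field_simp
    ring
  rw [hkey]
  -- bound
  have hEb : ∀ k, (α S k / S) * |Efun (α S k)| ≤ 12 / pibar k / S^2 := by
    intro k
    have ha := hα k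
    have hp := hpppos k
    have h1 : (α S k / S) * |Efun (α S k)| ≤ (α S k / S) * (6 / (α S k)^2) :=
      mul_le_mul_of_nonneg_left (Efun_bound (hαk2 k)) (by positivity)
    refine h1.trans ?_
    have h2 : (α S k / S) * (6 / (α S k)^2) = 6 / (S * α S k) := by
      field_simp
    rw [h2, div_div, div_le_div_iff₀ (by positivity) (by positivity)]
    have h3 := hαlb k
    nlinarith [mul_le_mul_of_nonneg_left h3 (le_of_lt (show (0:ℝ) < 12*S by positivity))]
  calc |(∑ k, (α S k / S) * Efun (α S k)) - Efun S|
      ≤ |∑ k, (α S k / S) * Efun (α S k)| + |Efun S| := abs_sub _ _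
    _ ≤ (∑ k, (α S k / S) * |Efun (α S k)|) + 6 / S^2 := by
        refine add_le_add ?_ (Efun_bound hS2)
        refine (Finset.abs_sum_le_sum_abs _ _).trans (le_of_eq ?_)
        refine Finset.sum_congr rfl fun k _ => ?_
        rw [abs_mul, abs_of_nonneg (le_of_lt (by have := hα k; positivity))]
    _ ≤ (∑ k, 12 / pibar k / S^2) + 6 / S^2 := by
        refine add_le_add (Finset.sum_le_sum fun k _ => hEb k) le_rfl
    _ = (6 + ∑ k, 12 / pibar k) / S^2 := by
        rw [← Finset.sum_div, add_div]
        ring
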